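/- Let X, Y be real Hilbert spaces, f : X → ℝ and c : X → Y twice continuously Fréchet differentiable near 0, with c(0) = 0 and c'(0) surjective. Suppose p ∈ Y* satisfies f'(0) + p ∘ c'(0) = 0, and there exists α > 0 such that the Lagrangian L(x) = f(x) + p(c(x)) satisfies L''(0)(v,v) ≥ α‖v‖² for all v ∈ ker c'(0). Then 0 is a strict local minimizer of f on the feasible set {x : c(x) = 0}, provided the feasible set near 0 coincides with the image under a C² local diffeomorphism φ (φ(0)=0, φ'(0)=id) of ker c'(0). -/

import Mathlib

open Topology

set_option maxHeartbeats 4000000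

/-- Second order sufficient optimality condition: a KKT point with Lagrangian Hessian
elliptic on the kernel of the constraint derivative is a strict local minimizer on the
feasible set, provided the feasible set is locally parametrized over the kernel. -/
theorem stmt8
    {X : Type*} [NormedAddCommGroup X] [InnerProductSpace ℝ X] [CompleteSpace X]
    {Y : Type*} [NormedAddCommGroup Y] [InnerProductSpace ℝ Y] [CompleteSpace Y]
    (f : X → ℝ) (c : X → Y) (p : Y →L[ℝ] ℝ) (φ : X → X) (α : ℝ)
    (hf : ContDiffAt ℝ 2 f 0) (hc : ContDiffAt ℝ 2 c 0) (hc0 : c 0 = 0)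
    (hsurj : Function.Surjective (fderiv ℝ c 0))
    (hKKT : fderiv ℝ f 0 + p.comp (fderiv ℝ c 0) = 0)
    (hα : 0 < α)
    (hell : ∀ v ∈ LinearMap.ker (fderiv ℝ c 0 : X →ₗ[ℝ] Y),
      α * ‖v‖ ^ 2 ≤ fderiv ℝ (fderiv ℝ (fun x => f x + p (c x))) 0 v v)
    (hφ : ContDiffAt ℝ 2 φ 0) (hφ0 : φ 0 = 0)
    (hφ' : fderiv ℝ φ 0 = ContinuousLinearMap.id ℝ X)
    (hfeas : ∃ U ∈ 𝓝 (0 : X), ∃ V ∈ 𝓝 (0 : X),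
      {x ∈ U | c x = 0} = φ '' (V ∩ (LinearMap.ker (fderiv ℝ c 0 : X →ₗ[ℝ] Y) : Set X))) :
    ∃ W ∈ 𝓝 (0 : X), ∀ x ∈ W, c x = 0 → x ≠ 0 → f 0 < f x := by
  clear hφ hφ0 hφ' hfeas
  set A : X →L[ℝ] Y := fderiv ℝ c 0 with hAdef
  set K : Submodule ℝ X := LinearMap.ker (A : X →ₗ[ℝ] Y) with hKdef
  set L : X → ℝ := fun x => f x + p (c x) with hLdef
  set B : X →L[ℝ] X →L[ℝ] ℝ := fderiv ℝ (fderiv ℝ L) 0 with hBdef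
  -- basic smoothness facts
  have hL : ContDiffAt ℝ 2 L 0 := by
    rw [hLdef]; exact hf.add (p.contDiff.contDiffAt.comp 0 hc)
  have hdc : DifferentiableAt ℝ c 0 := hc.differentiableAt two_ne_zero
  have hdf : DifferentiableAt ℝ f 0 := hf.differentiableAt two_ne_zero
  have hL'0 : fderiv ℝ L 0 = 0 := by
    have h1 : HasFDerivAt (fun x => p (c x)) (p.comp A) 0 :=
      p.hasFDerivAt.comp 0 hdc.hasFDerivAt
    have h2 : HasFDerivAt L (fderiv ℝ f 0 + p.comp A) 0 := by
      rw [hLdef]; exact hdf.hasFDerivAt.add h1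
    rw [h2.fderiv]; exact hKKT
  have hsymm : ∀ v w : X, B v w = B w v := by
    intro v w
    exact (hL.isSymmSndFDerivAt (by norm_num)) v w
  -- a neighborhood where L is C², with continuous second derivative
  obtain ⟨U₀, hU₀, hLU₀⟩ := hL.contDiffOn le_rfl (by simp)
  obtain ⟨U, hUsub, hUopen, hU0⟩ := mem_nhds_iff.1 hU₀
  have hLU : ContDiffOn ℝ 2 L U := hLU₀.mono hUsub
  set F : X → (X →L[ℝ] ℝ) := fderiv ℝ L with hFdef
  have hFU : ContDiffOn ℝ 1 F U := by
    rw [hFdef]; exact hLU.fderiv_of_isOpen hUopen (by norm_num)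
  have hLdiff : ∀ z ∈ U, DifferentiableAt ℝ L z := fun z hz =>
    ((hLU.differentiableOn two_ne_zero).differentiableAt (hUopen.mem_nhds hz))
  have hFdiff : ∀ z ∈ U, DifferentiableAt ℝ F z := fun z hz =>
    ((hFU.differentiableOn one_ne_zero).differentiableAt (hUopen.mem_nhds hz))
  have hFcont : ContinuousOn (fderiv ℝ F) U :=
    hFU.continuousOn_fderiv_of_isOpen hUopen le_rfl
  -- a neighborhood where c is C¹, with continuous derivative
  obtain ⟨Vc₀, hVc₀, hcV₀⟩ := hc.contDiffOn le_rfl (by simp)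
  obtain ⟨Vc, hVcsub, hVcopen, hVc0⟩ := mem_nhds_iff.1 hVc₀
  have hcV : ContDiffOn ℝ 2 c Vc := hcV₀.mono hVcsub
  have hcdiff : ∀ z ∈ Vc, DifferentiableAt ℝ c z := fun z hz =>
    ((hcV.differentiableOn two_ne_zero).differentiableAt (hVcopen.mem_nhds hz))
  have hccont : ContinuousOn (fderiv ℝ c) Vc :=
    hcV.continuousOn_fderiv_of_isOpen hVcopen one_le_two
  -- linear algebra: bound on the orthogonal complement of K
  haveI hKclosed : IsClosed (K : Set X) := ContinuousLinearMap.isClosed_ker A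
  haveI : CompleteSpace K := hKclosed.completeSpace_coe
  haveI : CompleteSpace Kᗮ := K.isClosed_orthogonal.completeSpace_coe
  set e : Kᗮ →L[ℝ] Y := A.comp Kᗮ.subtypeL with hedef
  have hinj : LinearMap.ker (e : Kᗮ →ₗ[ℝ] Y) = ⊥ := by
    rw [Submodule.eq_bot_iff]
    intro u hu
    have hu' : (u : X) ∈ K ⊓ Kᗮ := by
      constructor
      · have : A (u : X) = 0 := hu
        exact LinearMap.mem_ker.2 this
      · exact u.2
    rw [K.inf_orthogonal_eq_bot] at hu'
    exact Subtype.ext (by simpa using hu')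
  have hrange : LinearMap.range (e : Kᗮ →ₗ[ℝ] Y) = ⊤ := by
    rw [LinearMap.range_eq_top]
    intro y
    obtain ⟨x, hx⟩ := hsurj y
    obtain ⟨k, hk, u, hu, hdecomp⟩ := K.exists_add_mem_mem_orthogonal x
    refine ⟨⟨u, hu⟩, ?_⟩
    have hAk : A k = 0 := LinearMap.mem_ker.1 (hKdef ▸ hk)
    have : A u = y := by
      have : A x = A k + A u := by rw [hdecomp]; exact A.map_add k u
      rw [hAk, zero_add] at this
      rw [← this, hx]
    simpa [hedef] using this
  set E := ContinuousLinearEquiv.ofBijective e hinj hrange with hEdef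
  set C₀ : ℝ := ‖(E.symm : Y →L[ℝ] Kᗮ)‖ with hC₀def
  have hC₀nonneg : 0 ≤ C₀ := norm_nonneg _
  have hbound : ∀ u : Kᗮ, ‖(u : X)‖ ≤ C₀ * ‖A (u : X)‖ := by
    intro u
    have h1 : E.symm (e u) = u := by
      rw [hEdef]
      exact ContinuousLinearEquiv.ofBijective_symm_apply_apply e hinj hrange u
    have h2 : ‖(u : X)‖ = ‖E.symm (e u)‖ := by rw [h1]; rfl
    calc ‖(u : X)‖ = ‖E.symm (e u)‖ := h2
      _ ≤ C₀ * ‖e u‖ := (E.symm : Y →L[ℝ] Kᗮ).le_opNorm _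
      _ = C₀ * ‖A (u : X)‖ := by rw [hedef]; rfl
  -- constants
  set M : ℝ := ‖B‖ with hMdef
  have hM : 0 ≤ M := by rw [hMdef]; exact norm_nonneg B
  set η : ℝ := min 1 (α / (2 * (α + 3 * M + 1))) with hηdef
  have hden : (0:ℝ) < 2 * (α + 3 * M + 1) := by linarith
  have hηpos : 0 < η := lt_min one_pos (div_pos hα hden)
  have hη1 : η ≤ 1 := min_le_left _ _
  have hηle : η * (2 * (α + 3 * M + 1)) ≤ α := by
    have := min_le_right 1 (α / (2 * (α + 3 * M + 1)))
    calc η * (2 * (α + 3 * M + 1)) ≤ (α / (2 * (α + 3 * M + 1))) * (2 * (α + 3 * M + 1)) := by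
          exact mul_le_mul_of_nonneg_right this (le_of_lt hden)
      _ = α := div_mul_cancel₀ α (ne_of_gt hden)
  have key : α / 2 ≤ α * (1 - η ^ 2) - 2 * M * η - M * η ^ 2 := by
    have hη2 : η ^ 2 ≤ η := by
      rw [sq]; exact mul_le_of_le_one_right (le_of_lt hηpos) hη1
    have e1 : α * η ^ 2 ≤ α * η := mul_le_mul_of_nonneg_left hη2 (le_of_lt hα)
    have e2 : M * η ^ 2 ≤ M * η := mul_le_mul_of_nonneg_left hη2 hM
    have e3 : (α + 3 * M + 1) * η ≤ α / 2 := by linarith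
    linarith [le_of_lt hηpos]
  set ε : ℝ := α / 8 with hεdef
  have hεpos : 0 < ε := by positivity
  set ε₂ : ℝ := η / (C₀ + 1) with hε₂def
  have hε₂pos : 0 < ε₂ := div_pos hηpos (by linarith)
  have hCε₂ : C₀ * ε₂ ≤ η := by
    rw [hε₂def]
    have h1 : C₀ / (C₀ + 1) ≤ 1 := by
      rw [div_le_one (by linarith)]; linarith
    calc C₀ * (η / (C₀ + 1)) = (C₀ / (C₀ + 1)) * η := by ring
      _ ≤ 1 * η := mul_le_mul_of_nonneg_right h1 (le_of_lt hηpos)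
      _ = η := one_mul η
  -- choose δ for the second derivative of L
  have hFat : ContinuousAt (fderiv ℝ F) 0 := hFcont.continuousAt (hUopen.mem_nhds hU0)
  obtain ⟨δ₁, hδ₁pos, hδ₁⟩ := (Metric.continuousAt_iff (f := fderiv ℝ F)).1 hFat ε hεpos
  obtain ⟨r₁, hr₁pos, hr₁sub⟩ := Metric.isOpen_iff.1 hUopen 0 hU0
  -- choose δ for the derivative of c
  have hcat : ContinuousAt (fderiv ℝ c) 0 := hccont.continuousAt (hVcopen.mem_nhds hVc0)
  obtain ⟨δ₂, hδ₂pos, hδ₂⟩ := (Metric.continuousAt_iff (f := fderiv ℝ c)).1 hcat ε₂ hε₂pos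
  obtain ⟨r₂, hr₂pos, hr₂sub⟩ := Metric.isOpen_iff.1 hVcopen 0 hVc0
  set δ : ℝ := min (min δ₁ r₁) (min δ₂ r₂) with hδdef
  have hδpos : 0 < δ := by
    apply lt_min <;> [skip; skip] <;> exact lt_min (by assumption) (by assumption)
  have hδU : Metric.ball (0:X) δ ⊆ U := fun z hz =>
    hr₁sub (Metric.ball_subset_ball (le_trans (min_le_left _ _) (min_le_right _ _)) hz)
  have hδVc : Metric.ball (0:X) δ ⊆ Vc := fun z hz =>
    hr₂sub (Metric.ball_subset_ball (le_trans (min_le_right _ _) (min_le_right _ _)) hz)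
  have hδδ₁ : δ ≤ δ₁ := le_trans (min_le_left _ _) (min_le_left _ _)
  have hδδ₂ : δ ≤ δ₂ := le_trans (min_le_right _ _) (min_le_left _ _)
  -- Step A : ‖F y - B y‖ ≤ ε ‖y‖ on the ball
  have hF0 : F 0 = 0 := hL'0
  have hfderivF0 : fderiv ℝ F 0 = B := rfl
  have hStepA : ∀ y ∈ Metric.ball (0:X) δ, ‖F y - B y‖ ≤ ε * ‖y‖ := by
    intro y hy
    have hball : Metric.ball (0:X) δ ⊆ U := hδU
    have hmv := (convex_ball (0:X) δ).norm_image_sub_le_of_norm_fderiv_le'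
      (fun z hz => hFdiff z (hball hz))
      (fun z hz => by
        have hz' : dist z (0:X) < δ₁ := lt_of_lt_of_le (by simpa using hz) hδδ₁
        have := hδ₁ hz'
        rw [hfderivF0] at this
        exact le_of_lt (lt_of_eq_of_lt (dist_eq_norm (fderiv ℝ F z) B).symm this))
      (Metric.mem_ball_self hδpos) hy
    simpa [hF0] using hmv
  -- Step c : ‖A x‖ ≤ ε₂ ‖x‖ for feasible x in the ball
  have hStepC : ∀ x ∈ Metric.ball (0:X) δ, c x = 0 → ‖A x‖ ≤ ε₂ * ‖x‖ := by
    intro x hx hcx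
    have hmv := (convex_ball (0:X) δ).norm_image_sub_le_of_norm_fderiv_le'
      (fun z hz => hcdiff z (hδVc hz))
      (fun z hz => by
        have hz' : dist z (0:X) < δ₂ := lt_of_lt_of_le (by simpa using hz) hδδ₂
        have := hδ₂ hz'
        rw [dist_eq_norm] at this
        exact le_of_lt this)
      (Metric.mem_ball_self hδpos) hx
    have : ‖c x - c 0 - A (x - 0)‖ ≤ ε₂ * ‖x - 0‖ := hmv
    rw [hcx, hc0] at this
    simpa using this
  -- derivative of the quadratic comparison function
  have hder : ∀ y ∈ Metric.ball (0:X) δ,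
      HasFDerivAt (fun z => 2 * L z - B z z) ((2:ℝ) • (F y - B y)) y := by
    intro y hy
    have hyU : y ∈ U := hδU hy
    have h1 : HasFDerivAt L (F y) y := (hLdiff y hyU).hasFDerivAt
    have h2 : HasFDerivAt (fun z : X => B z z) (B y + B y) y := by
      have h3 := (B.hasFDerivAt (x := y)).clm_apply (hasFDerivAt_id y)
      refine h3.congr_fderiv ?_
      ext v
      simp only [ContinuousLinearMap.add_apply, ContinuousLinearMap.coe_comp',
        Function.comp_apply, ContinuousLinearMap.coe_id', id_eq,
        ContinuousLinearMap.flip_apply]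
      rw [hsymm v y]
    have h4 := (h1.const_mul (2:ℝ)).sub h2
    refine h4.congr_fderiv ?_
    ext v
    simp only [ContinuousLinearMap.smul_apply, ContinuousLinearMap.sub_apply,
      ContinuousLinearMap.add_apply, smul_eq_mul]
    ring
  clear_value δ ε₂ ε η M C₀ E e B F L K A
  clear hLU₀ hLU hFU hcV₀ hcV hFcont hccont hLdiff hFdiff hcdiff hδ₁ hδ₂ hr₁sub hr₂sub
  clear hδU hδVc hδδ₁ hδδ₂ hU₀ hUsub hUopen hU0 hVc₀ hVcsub hVcopen hVc0 hFat hcat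
  clear hBdef hFdef hAdef hEdef hC₀def hedef hηdef hε₂def hδdef hden hηle
  clear hL hdc hdf hf hc hsurj hKKT hinj hrange hL'0 hF0 hfderivF0
  -- main argument
  refine ⟨Metric.ball 0 δ, Metric.ball_mem_nhds 0 hδpos, ?_⟩
  intro x hx hcx hxne
  set r : ℝ := ‖x‖ with hrdef
  have hrpos : 0 < r := norm_pos_iff.2 hxne
  have hrδ : r < δ := by simpa [hrdef] using Metric.mem_ball.1 hx
  clear_value r
  -- decompose x
  obtain ⟨k, hk, u, hu, hdecomp⟩ := K.exists_add_mem_mem_orthogonal x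
  have hAu : A u = A x := by
    have hAk : A k = 0 := LinearMap.mem_ker.1 (hKdef ▸ hk)
    have : A x = A k + A u := by rw [hdecomp]; exact A.map_add k u
    rw [hAk, zero_add] at this
    exact this.symm
  have hule : ‖u‖ ≤ η * r := by
    have h1 : ‖u‖ ≤ C₀ * ‖A u‖ := hbound ⟨u, hu⟩
    have h2 : ‖A x‖ ≤ ε₂ * r := by rw [hrdef]; exact hStepC x hx hcx
    calc ‖u‖ ≤ C₀ * ‖A u‖ := h1
      _ = C₀ * ‖A x‖ := by rw [hAu]
      _ ≤ C₀ * (ε₂ * r) := mul_le_mul_of_nonneg_left h2 hC₀nonneg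
      _ = (C₀ * ε₂) * r := by ring
      _ ≤ η * r := mul_le_mul_of_nonneg_right hCε₂ (le_of_lt hrpos)
  have hinner : (inner ℝ k u : ℝ) = 0 := Submodule.inner_right_of_mem_orthogonal hk hu
  have hpyth0 : ‖k + u‖ ^ 2 = ‖k‖ ^ 2 + ‖u‖ ^ 2 := by
    rw [norm_add_sq_real, hinner]; ring
  have hpyth : r ^ 2 = ‖k‖ ^ 2 + ‖u‖ ^ 2 := by
    rw [hrdef, hdecomp]; exact hpyth0
  have hknorm : ‖k‖ ≤ r := by
    have h1 : ‖k‖ ^ 2 ≤ r ^ 2 := by linarith [sq_nonneg ‖u‖]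
    exact (pow_le_pow_iff_left₀ (norm_nonneg k) (le_of_lt hrpos) two_ne_zero).1 h1
  -- ellipticity estimate on B x x
  have hBkk : α * ‖k‖ ^ 2 ≤ B k k := hell k hk
  have hBku : |B k u| ≤ M * ‖k‖ * ‖u‖ := by
    have := B.le_opNorm₂ k u
    calc |B k u| = ‖B k u‖ := rfl
      _ ≤ ‖B‖ * ‖k‖ * ‖u‖ := this
      _ = M * ‖k‖ * ‖u‖ := by rw [hMdef]
  have hBuu : |B u u| ≤ M * ‖u‖ * ‖u‖ := by
    have := B.le_opNorm₂ u u
    calc |B u u| = ‖B u u‖ := rfl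
      _ ≤ ‖B‖ * ‖u‖ * ‖u‖ := this
      _ = M * ‖u‖ * ‖u‖ := by rw [hMdef]
  have hBxx : (α / 2) * r ^ 2 ≤ B x x := by
    have hexp : B x x = B k k + B k u + B u k + B u u := by
      rw [hdecomp]
      simp [map_add, ContinuousLinearMap.add_apply]
      ring
    have hsym' : B u k = B k u := hsymm u k
    have h1 : α * ‖k‖ ^ 2 = α * r ^ 2 - α * ‖u‖ ^ 2 := by rw [hpyth]; ring
    have h2 : ‖u‖ ^ 2 ≤ η ^ 2 * r ^ 2 := by
      have := mul_self_le_mul_self (norm_nonneg u) hule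
      calc ‖u‖ ^ 2 = ‖u‖ * ‖u‖ := sq ‖u‖
        _ ≤ (η * r) * (η * r) := this
        _ = η ^ 2 * r ^ 2 := by ring
    have h3 : M * ‖k‖ * ‖u‖ ≤ M * η * r ^ 2 := by
      have hku : ‖k‖ * ‖u‖ ≤ r * (η * r) :=
        mul_le_mul hknorm hule (norm_nonneg u) (le_of_lt hrpos)
      calc M * ‖k‖ * ‖u‖ = M * (‖k‖ * ‖u‖) := by ring
        _ ≤ M * (r * (η * r)) := mul_le_mul_of_nonneg_left hku hM
        _ = M * η * r ^ 2 := by ring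
    have h4 : |B k u| ≤ M * η * r ^ 2 := le_trans hBku h3
    have h5 : |B u u| ≤ M * η ^ 2 * r ^ 2 := by
      refine le_trans hBuu ?_
      have h5a : M * ‖u‖ ^ 2 ≤ M * (η ^ 2 * r ^ 2) := mul_le_mul_of_nonneg_left h2 hM
      calc M * ‖u‖ * ‖u‖ = M * ‖u‖ ^ 2 := by ring
        _ ≤ M * (η ^ 2 * r ^ 2) := h5a
        _ = M * η ^ 2 * r ^ 2 := by ring
    have h6 : (α / 2) * r ^ 2 ≤ (α * (1 - η ^ 2) - 2 * M * η - M * η ^ 2) * r ^ 2 :=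
      mul_le_mul_of_nonneg_right key (sq_nonneg r)
    have h7 : -(M * η * r ^ 2) ≤ B k u := neg_le_of_abs_le h4
    have h8 : -(M * η ^ 2 * r ^ 2) ≤ B u u := neg_le_of_abs_le h5
    have e4 : α * ‖u‖ ^ 2 ≤ α * (η ^ 2 * r ^ 2) := mul_le_mul_of_nonneg_left h2 (le_of_lt hα)
    linarith [hBkk]
  -- Taylor estimate
  have hrball : Metric.closedBall (0:X) r ⊆ Metric.ball (0:X) δ :=
    Metric.closedBall_subset_ball hrδ
  have htaylor : ‖(2 * L x - B x x) - (2 * L 0 - B 0 0)‖ ≤ (2 * ε * r) * ‖x - 0‖ := by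
    have hmv := (convex_closedBall (0:X) r).norm_image_sub_le_of_norm_hasFDerivWithin_le
      (f' := fun y => (2:ℝ) • (F y - B y))
      (fun y hy => (hder y (hrball hy)).hasFDerivWithinAt)
      (fun y hy => by
        have hyball : y ∈ Metric.ball (0:X) δ := hrball hy
        have h1 : ‖F y - B y‖ ≤ ε * ‖y‖ := hStepA y hyball
        have h2 : ‖y‖ ≤ r := by simpa using Metric.mem_closedBall.1 hy
        calc ‖(2:ℝ) • (F y - B y)‖ = 2 * ‖F y - B y‖ := by
              rw [norm_smul (2:ℝ) (F y - B y)]; norm_num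
          _ ≤ 2 * (ε * ‖y‖) := by linarith
          _ ≤ 2 * ε * r := by
              have := mul_le_mul_of_nonneg_left h2 (le_of_lt hεpos)
              linarith)
      (Metric.mem_closedBall_self (le_of_lt hrpos))
      (show x ∈ Metric.closedBall (0:X) r by simpa [hrdef] using Metric.mem_closedBall_self (le_refl r))
    exact hmv
  have hL0 : L 0 = f 0 := by rw [hLdef]; simp [hc0]
  have hLx : L x = f x := by rw [hLdef]; simp [hcx]
  have hB00 : B 0 0 = 0 := by simp
  have hfinal : 2 * L 0 + B x x - B 0 0 - 2 * ε * r * r ≤ 2 * L x := by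
    have h1 : |(2 * L x - B x x) - (2 * L 0 - B 0 0)| ≤ 2 * ε * r * r := by
      have : ‖x - 0‖ = r := by simp [hrdef]
      rw [this] at htaylor
      exact htaylor
    have h2 := neg_le_of_abs_le h1
    linarith
  have hrr : r * r = r ^ 2 := by ring
  have hfin2 : 2 * L 0 + (α/2) * r ^ 2 - 2 * ε * r ^ 2 ≤ 2 * L x := by
    rw [hB00] at hfinal
    linarith [hBxx]
  have hεr : 2 * ε * r ^ 2 < (α/2) * r ^ 2 := by
    rw [hεdef]
    have := mul_pos hα (pow_pos hrpos 2)
    linarith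
  have hfin3 : L 0 < L x := by linarith
  rw [hL0, hLx] at hfin3
  exact hfin3
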